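/- Let T be a finite rooted tree. To each internal node l associate a design variable ρ_l ∈ ℝ^{d_l} and differentiable weight functions ω_{l,i} : ℝ^{d_l} → ℝ for i ∈ C(l); to each leaf l associate a constant κ_l ∈ ℝ. Define κ̃_l(ρ) recursively by κ̃_l = κ_l for leaves and κ̃_l(ρ) = Σ_{i ∈ C(l)} ω_{l,i}(ρ_l) κ̃_i(ρ) for internal nodes, where ρ = (ρ_m)_{m internal node}. Then for every internal node l₀, the partial derivative of the root value with respect to the design variable ρ_{l₀} is ∂_{ρ_{l₀}} κ̃_root = (Π_{edges (p,c) on the path from the root to l₀} ω_{p,c}(ρ_p)) · Σ_{i ∈ C(l₀)} κ̃_i(ρ) · dω_{l₀,i}/dρ_{l₀}, i.e. the recursive derivative evaluation of Algorithm 1 is correct. -/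

import Mathlib

variable {E : Type*} [NormedAddCommGroup E] [NormedSpace ℝ E]

/-- A finite rooted tree for hierarchical interpolation: leaves carry a constant
material property `κ ∈ ℝ`; each internal node `l` carries its own (dissociated)
design variable `ρ_l : E` together with the list of its children, each child being
paired with its weight function `ω_{l,i} : E → ℝ`. -/
inductive DTree (E : Type*) : Type _ where
  | leaf (κ : ℝ)
  | node (ρ : E) (children : List ((E → ℝ) × DTree E))

namespace DTree

/-- Recursive interpolation (eq. (3) of the paper): `κ̃_l = κ_l` on leaves and
`κ̃_l(ρ) = Σ_{i ∈ C(l)} ω_{l,i}(ρ_l) κ̃_i(ρ)` on internal nodes, each weight being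
evaluated at the design variable stored in its node. -/
def interp : DTree E → ℝ
  | leaf κ => κ
  | node ρ cs => (cs.attach.map (fun p => p.1.1 ρ * interp p.1.2)).sum
decreasing_by
  obtain ⟨⟨ω, t'⟩, hmem⟩ := p
  have h := List.sizeOf_lt_of_mem hmem
  simp only [Prod.mk.sizeOf_spec, DTree.node.sizeOf_spec] at h ⊢
  omega

/-- Subtree rooted at the node reached from the root by following the list of child
indices `p` (Neveu's notation), if it exists. -/
def subAt : DTree E → List ℕ → Option (DTree E)
  | t, [] => some t
  | leaf _, _ :: _ => none
  | node _ cs, i :: p =>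
      match cs[i]? with
      | some q => subAt q.2 p
      | none => none

/-- Replace by `x` the design variable stored at the node reached from the root by
following the list of child indices `p`, leaving every other node untouched. -/
def updateAt : DTree E → List ℕ → E → DTree E
  | leaf κ, _, _ => leaf κ
  | node _ cs, [], x => node x cs
  | node ρ cs, i :: p, x =>
      match cs[i]? with
      | some q => node ρ (cs.set i (q.1, updateAt q.2 p x))
      | none => node ρ cs

/-- Product of the branch weights `ω_{p,c}(ρ_p)` along the path from the root to the
node addressed by the list of child indices `p`. -/
def pathProd : DTree E → List ℕ → ℝ
  | _, [] => 1
  | leaf _, _ :: _ => 1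
  | node ρ cs, i :: p =>
      match cs[i]? with
      | some q => q.1 ρ * pathProd q.2 p
      | none => 1


theorem interp_node (ρ : E) (cs : List ((E → ℝ) × DTree E)) :
    interp (node ρ cs) = (cs.map (fun q => q.1 ρ * interp q.2)).sum := by
  rw [interp]
  congr 1
  exact List.attach_map_val (l := cs) (f := fun q => q.1 ρ * interp q.2)

theorem hasFDerivAt_interp_sum (cs : List ((E → ℝ) × DTree E)) (ρ₀ : E)
    (hdiff : ∀ q ∈ cs, DifferentiableAt ℝ q.1 ρ₀) :
    HasFDerivAt (fun x => (cs.map (fun q => q.1 x * interp q.2)).sum)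
      ((cs.map (fun q => interp q.2 • fderiv ℝ q.1 ρ₀)).sum) ρ₀ := by
  induction cs with
  | nil => simpa using hasFDerivAt_const (0 : ℝ) ρ₀
  | cons q cs ih =>
    simp only [List.map_cons, List.sum_cons]
    exact (((hdiff q (by simp)).hasFDerivAt).mul_const (interp q.2)).add
      (ih fun r hr => hdiff r (List.mem_cons_of_mem _ hr))

/-- correctness of Algorithm 1: let `l₀` be the internal node addressed
by the path `p`, carrying the design variable `ρ₀` and children `cs`, with weight
functions differentiable at `ρ₀`.  Then the derivative of the root value `κ̃_root`
with respect to the design variable `ρ_{l₀}` is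
`(Π_{(p,c) on the root-to-l₀ path} ω_{p,c}(ρ_p)) • Σ_{i ∈ C(l₀)} κ̃_i • dω_{l₀,i}/dρ_{l₀}`. -/
theorem hasFDerivAt_interp_updateAt (t : DTree E) (p : List ℕ) (ρ₀ : E)
    (cs : List ((E → ℝ) × DTree E))
    (hsub : subAt t p = some (node ρ₀ cs))
    (hdiff : ∀ q ∈ cs, DifferentiableAt ℝ q.1 ρ₀) :
    HasFDerivAt (fun x => interp (updateAt t p x))
      (pathProd t p • (cs.map (fun q => interp q.2 • fderiv ℝ q.1 ρ₀)).sum) ρ₀ := by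
  induction p generalizing t with
  | nil =>
    cases t with
    | leaf κ => simp [subAt] at hsub
    | node ρ cs' =>
      simp only [subAt, Option.some.injEq, node.injEq] at hsub
      obtain ⟨rfl, rfl⟩ := hsub
      simp only [updateAt, pathProd, one_smul, interp_node]
      exact hasFDerivAt_interp_sum _ _ hdiff
  | cons i p ih =>
    cases t with
    | leaf κ => simp [subAt] at hsub
    | node ρ cs' =>
      unfold subAt at hsub
      cases h : cs'[i]? with
      | none => simp only [h] at hsub; cases hsub
      | some q =>
        simp only [h] at hsub
        obtain ⟨hi, hq⟩ := List.getElem?_eq_some_iff.mp h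
        have hset : ∀ v : (E → ℝ) × DTree E,
            cs'.set i v = cs'.take i ++ v :: cs'.drop (i + 1) :=
          fun v => List.set_eq_take_cons_drop v hi
        have hD := ih q.2 hsub
        simp only [updateAt, pathProd, h, hset, interp_node, List.map_append,
          List.sum_append, List.map_cons, List.sum_cons, mul_smul]
        exact ((hD.const_mul (q.1 ρ)).add_const _).const_add _


end DTree
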